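/- The three-component operator P with only nonzero entries P^{12} = u^3_x + u^1 u^3_y and P^{21} = −(u^3_x + u^1 u^3_y) satisfies Mokhov's conditions (a1)–(a7) for a 2D Hamiltonian operator; in particular, its metrics are both identically zero (g = g̃ = 0), the x-part coefficients are b^{12}_3 = −b^{21}_3 = 1, and the y-part coefficients are b̃^{12}_3 = −b̃^{21}_3 = u^1, all other coefficients vanishing. -/
import Mathlib


open scoped BigOperators

/-- Partial derivative of `f` with respect to the `k`-th coordinate. -/
noncomputable def pd {n : ℕ} (k : Fin n) (f : (Fin n → ℝ) → ℝ) (x : Fin n → ℝ) : ℝ :=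
  fderiv ℝ f x (Pi.single k 1)

/-- The bracketed expression appearing in Mokhov's conditions (a5) and (a7). -/
noncomputable def mokA5 {d n : ℕ}
    (g : Fin d → Fin n → Fin n → (Fin n → ℝ) → ℝ)
    (b : Fin d → Fin n → Fin n → Fin n → (Fin n → ℝ) → ℝ)
    (α β : Fin d) (i j r q : Fin n) (x : Fin n → ℝ) : ℝ :=
  ∑ s, (g α s i x * (pd q (b β j r s) x - pd s (b β j r q) x)
        + b α i j s x * b β s r q x - b α i r s x * b β s j q x)

/-- Mokhov's conditions (a1)–(a7) for a `d`-dimensional first-order Hamiltonian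
operator of Dubrovin–Novikov type with metrics `g` and coefficients `b`, on a domain `U`. -/
def Mokhov (d n : ℕ) (U : Set (Fin n → ℝ))
    (g : Fin d → Fin n → Fin n → (Fin n → ℝ) → ℝ)
    (b : Fin d → Fin n → Fin n → Fin n → (Fin n → ℝ) → ℝ) : Prop :=
  -- (a1)
  (∀ x ∈ U, ∀ α i j, g α i j x = g α j i x) ∧
  -- (a2)
  (∀ x ∈ U, ∀ α i j k, pd k (g α i j) x = b α i j k x + b α j i k x) ∧
  -- (a3)
  (∀ x ∈ U, ∀ α β i j r,
    (∑ s, (g α s i x * b β j r s x - g β s j x * b α i r s x))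
      + (∑ s, (g β s i x * b α j r s x - g α s j x * b β i r s x)) = 0) ∧
  -- (a4)
  (∀ x ∈ U, ∀ α β i j r,
    (∑ s, (g α s i x * b β j r s x - g β s j x * b α i r s x))
      + (∑ s, (g α s j x * b β r i s x - g β s r x * b α j i s x))
      + (∑ s, (g α s r x * b β i j s x - g β s i x * b α r j s x)) = 0) ∧
  -- (a5)
  (∀ x ∈ U, ∀ α β i j r q,
    mokA5 g b α β i j r q x + mokA5 g b β α i j r q x = 0) ∧
  -- (a6)
  (∀ x ∈ U, ∀ α β i j r q,
    ∑ s, (g β s i x * pd s (b α j r q) x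
          - b β i j s x * b α s r q x - b β i r s x * b α j s q x)
    = ∑ s, (g α s j x * pd s (b β i r q) x
          - b α j i s x * b β s r q x - b β i s q x * b α j r s x)) ∧
  -- (a7)
  (∀ x ∈ U, ∀ α β i j r q k,
    pd k (mokA5 g b α β i j r q) x
    + ((∑ s, b β s i q x * (pd s (b α j r k) x - pd k (b α j r s) x))
       + (∑ s, b β s j q x * (pd s (b α r i k) x - pd k (b α r i s) x))
       + (∑ s, b β s r q x * (pd s (b α i j k) x - pd k (b α i j s) x)))
    + pd q (mokA5 g b β α i j r k) x
    + ((∑ s, b α s i k x * (pd s (b β j r q) x - pd q (b β j r s) x))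
       + (∑ s, b α s j k x * (pd s (b β r i q) x - pd q (b β r i s) x))
       + (∑ s, b α s r k x * (pd s (b β i j q) x - pd q (b β i j s) x))) = 0)


/-- Integer coefficient pattern of the operator. -/
def Dz (i j k : Fin 3) : ℤ :=
  if i = 0 ∧ j = 1 ∧ k = 2 then 1
  else if i = 1 ∧ j = 0 ∧ k = 2 then -1 else 0

/-- Real-valued coefficient pattern. -/
noncomputable def D (i j k : Fin 3) : ℝ := ((Dz i j k : ℤ) : ℝ)

lemma D_mul₁ (i j s r q : Fin 3) : D i j s * D s r q = 0 := by
  unfold D; rw [← Int.cast_mul]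
  have : ∀ i j s r q : Fin 3, Dz i j s * Dz s r q = 0 := by decide
  rw [this]; simp

lemma D_mul₂ (i r s j q : Fin 3) : D i r s * D j s q = 0 := by
  unfold D; rw [← Int.cast_mul]
  have : ∀ i r s j q : Fin 3, Dz i r s * Dz j s q = 0 := by decide
  rw [this]; simp

lemma D_add (i j k : Fin 3) : D i j k + D j i k = 0 := by
  unfold D; rw [← Int.cast_add]
  have : ∀ i j k : Fin 3, Dz i j k + Dz j i k = 0 := by decide
  rw [this]; simp

lemma D_k0 (j r : Fin 3) : D j r 0 = 0 := by
  unfold D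
  have : ∀ j r : Fin 3, Dz j r 0 = 0 := by decide
  rw [this]; simp

lemma D_k1 (j r : Fin 3) : D j r 1 = 0 := by
  unfold D
  have : ∀ j r : Fin 3, Dz j r 1 = 0 := by decide
  rw [this]; simp

lemma D_i2 (i q : Fin 3) : D 2 i q = 0 := by
  unfold D
  have : ∀ i q : Fin 3, Dz 2 i q = 0 := by decide
  rw [this]; simp

lemma D_G (i j r q k : Fin 3) :
    D j r k * D 0 i q + D r i k * D 0 j q + D i j k * D 0 r q = 0 := by
  unfold D
  rw [← Int.cast_mul, ← Int.cast_mul, ← Int.cast_mul, ← Int.cast_add, ← Int.cast_add]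
  have : ∀ i j r q k : Fin 3,
      Dz j r k * Dz 0 i q + Dz r i k * Dz 0 j q + Dz i j k * Dz 0 r q = 0 := by decide
  rw [this]; simp

lemma pd_const (k : Fin 3) (c : ℝ) (x : Fin 3 → ℝ) : pd k (fun _ => c) x = 0 := by
  simp [pd]

lemma pd_lin (k : Fin 3) (c : ℝ) (x : Fin 3 → ℝ) :
    pd k (fun y => c * y 0) x = c * (if k = 0 then 1 else 0) := by
  have h : HasFDerivAt (fun y : Fin 3 → ℝ => c * y 0)
      (c • (ContinuousLinearMap.proj (R := ℝ) (φ := fun _ : Fin 3 => ℝ) 0)) x :=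
    ((ContinuousLinearMap.proj (R := ℝ) (φ := fun _ : Fin 3 => ℝ) 0).hasFDerivAt (x := x)).const_mul c
  rw [pd, h.fderiv]
  simp [Pi.single_apply, eq_comm]

/-- the three-component operator with zero metrics,
b¹²₃ = -b²¹₃ = 1 (x-part) and b̃¹²₃ = -b̃²¹₃ = u¹ (y-part)
satisfies Mokhov's conditions (a1)–(a7). -/
theorem stmt10
    (g : Fin 2 → Fin 3 → Fin 3 → (Fin 3 → ℝ) → ℝ)
    (b : Fin 2 → Fin 3 → Fin 3 → Fin 3 → (Fin 3 → ℝ) → ℝ)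
    (hg : ∀ α i j x, g α i j x = 0)
    (hbx : ∀ i j k x, b 0 i j k x =
      if i = 0 ∧ j = 1 ∧ k = 2 then 1
      else if i = 1 ∧ j = 0 ∧ k = 2 then -1
      else 0)
    (hby : ∀ i j k x, b 1 i j k x =
      if i = 0 ∧ j = 1 ∧ k = 2 then x 0
      else if i = 1 ∧ j = 0 ∧ k = 2 then -(x 0)
      else 0) :
    Mokhov 2 3 Set.univ g b := by
  -- function forms of the coefficients
  have hb0 : ∀ i j k : Fin 3, b 0 i j k = fun _ => D i j k := by
    intro i j k; funext y; rw [hbx]; unfold D Dz; split_ifs <;> push_cast <;> ring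
  have hb1 : ∀ i j k : Fin 3, b 1 i j k = fun y => D i j k * y 0 := by
    intro i j k; funext y; rw [hby]; unfold D Dz; split_ifs <;> push_cast <;> ring
  have hbE : ∀ (α : Fin 2) (i j k : Fin 3) (x : Fin 3 → ℝ),
      b α i j k x = D i j k * (if α = 1 then x 0 else 1) := by
    intro α i j k x
    have hα : α = 0 ∨ α = 1 := by omega
    rcases hα with hα | hα <;> subst hα
    · rw [hb0]; norm_num
    · rw [hb1]; norm_num
  have hgfun : ∀ (α : Fin 2) (i j : Fin 3), g α i j = fun _ => (0 : ℝ) := by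
    intro α i j; funext y; exact hg α i j y
  have hpd : ∀ (α : Fin 2) (i j k s : Fin 3) (x : Fin 3 → ℝ),
      pd s (b α i j k) x = D i j k * (if α = 1 ∧ s = 0 then 1 else 0) := by
    intro α i j k s x
    have hα : α = 0 ∨ α = 1 := by omega
    rcases hα with hα | hα <;> subst hα
    · rw [hb0, pd_const]; norm_num
    · rw [hb1, pd_lin]; by_cases hs : s = 0 <;> simp [hs]
  have hA5 : ∀ (α β : Fin 2) (i j r q : Fin 3),
      mokA5 g b α β i j r q = fun _ => (0 : ℝ) := by
    intro α β i j r q; funext x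
    unfold mokA5
    apply Finset.sum_eq_zero
    intro s _
    rw [hg, hbE α i j s x, hbE β s r q x, hbE α i r s x, hbE β s j q x]
    linear_combination
      ((if α = 1 then x 0 else 1) * (if β = 1 then x 0 else 1)) * D_mul₁ i j s r q
      - ((if α = 1 then x 0 else 1) * (if β = 1 then x 0 else 1)) * D_mul₁ i r s j q
  unfold Mokhov
  refine ⟨?_, ?_, ?_, ?_, ?_, ?_, ?_⟩
  · intro x _ α i j; rw [hg, hg]
  · intro x _ α i j k
    rw [hgfun, pd_const, hbE, hbE]
    linear_combination (-(if α = 1 then x 0 else 1)) * D_add i j k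
  · intro x _ α β i j r; simp [hg]
  · intro x _ α β i j r; simp [hg]
  · intro x _ α β i j r q; rw [hA5, hA5]; simp
  · intro x _ α β i j r q
    have hL : ∀ s : Fin 3,
        g β s i x * pd s (b α j r q) x
          - b β i j s x * b α s r q x - b β i r s x * b α j s q x = 0 := by
      intro s
      rw [hg, hbE β i j s x, hbE α s r q x, hbE β i r s x, hbE α j s q x]
      linear_combination
        (-((if β = 1 then x 0 else 1) * (if α = 1 then x 0 else 1))) * D_mul₁ i j s r q
        - ((if β = 1 then x 0 else 1) * (if α = 1 then x 0 else 1)) * D_mul₂ i r s j q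
    have hR : ∀ s : Fin 3,
        g α s j x * pd s (b β i r q) x
          - b α j i s x * b β s r q x - b β i s q x * b α j r s x = 0 := by
      intro s
      rw [hg, hbE α j i s x, hbE β s r q x, hbE β i s q x, hbE α j r s x]
      linear_combination
        (-((if α = 1 then x 0 else 1) * (if β = 1 then x 0 else 1))) * D_mul₁ j i s r q
        - ((if α = 1 then x 0 else 1) * (if β = 1 then x 0 else 1)) * D_mul₂ j r s i q
    rw [Finset.sum_eq_zero fun s _ => hL s, Finset.sum_eq_zero fun s _ => hR s]
  · intro x _ α β i j r q k
    have hS : ∀ (γ δ : Fin 2) (i j r q k : Fin 3),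
        (∑ s, b δ s i q x * (pd s (b γ j r k) x - pd k (b γ j r s) x))
        = ((if γ = 1 then 1 else 0) * (if δ = 1 then x 0 else 1)) * (D j r k * D 0 i q) := by
      intro γ δ i j r q k
      rw [Fin.sum_univ_three]
      simp only [hbE, hpd]
      rw [D_k0 j r, D_k1 j r, D_i2 i q]
      by_cases hγ : γ = 1 <;> by_cases hk : k = 0 <;> simp [hγ, hk] <;> ring
    rw [hA5 α β i j r q, hA5 β α i j r k, pd_const, pd_const,
        hS α β i j r q k, hS α β j r i q k, hS α β r i j q k,
        hS β α i j r k q, hS β α j r i k q, hS β α r i j k q]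
    linear_combination
      ((if α = 1 then 1 else 0) * (if β = 1 then x 0 else 1)) * D_G i j r q k
      + ((if β = 1 then 1 else 0) * (if α = 1 then x 0 else 1)) * D_G i j r k q
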